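/- Let ⟨H_n : n ∈ ω⟩ be a sequence with H_n ⊆ 2^n for each n and ∑_{n=1}^∞ |H_n| · 2^{-n} ≤ 1/4, let H = {x ∈ 2^ω : x↾n ∈ H_n for infinitely many n}, and define f_H(n) = min{m : ∑_{j=m}^∞ |H_j| · 2^{-j} < 4^{-n}}. If f ∈ ω^ω is strictly increasing and f_H ≤* f, then G_f is not a subset of H, where G_f = {x ∈ 2^ω : x(f(n)) = 0 for all n}. -/

import Mathlib

open Set Filter

namespace GfAux

open Finset ENNReal

lemma l1 : (2 : ℝ≥0∞) * (1/2) = 1 := by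
  rw [one_div]; exact ENNReal.mul_inv_cancel two_ne_zero ENNReal.ofNat_ne_top

lemma l2 : (1/4 : ℝ≥0∞) = (1/2) * (1/2) := by
  rw [one_div, one_div, ← ENNReal.mul_inv (Or.inl two_ne_zero) (Or.inl ENNReal.ofNat_ne_top)]
  norm_num

lemma l3 (n : ℕ) : (2:ℝ≥0∞)^(n+1) * (1/4)^n = 2 * (1/2)^n := by
  rw [l2, mul_pow, pow_succ]
  calc (2:ℝ≥0∞) ^ n * 2 * ((1/2) ^ n * (1/2) ^ n)
      = ((2:ℝ≥0∞) * (1/2))^n * (2 * (1/2)^n) := by ring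
    _ = 2 * (1/2)^n := by rw [l1, one_pow, one_mul]

lemma l5 : (2:ℝ≥0∞) * ((1/2)^3 * 2) = 1/2 := by
  calc (2:ℝ≥0∞) * ((1/2)^3 * 2) = (2*(1/2)) * ((2*(1/2)) * (1/2)) := by ring
    _ = 1/2 := by rw [l1]; ring

variable (f : ℕ → ℕ)

def p : ℕ → Prop := fun i => ∀ k ≤ i, f k ≠ i
instance : DecidablePred (p f) := fun _ => Nat.decidableBallLE _ _
def c : ℕ → ℕ := Nat.count (p f)
def phi (y : ℕ → Bool) : ℕ → Bool := fun m => if p f m then y (c f m) else false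
def ext {M : ℕ} (v : Fin M → Bool) : ℕ → Bool := fun m => if h : m < M then v ⟨m, h⟩ else false

lemma c_mono : Monotone (c f) := Nat.count_monotone _
lemma c_lt_c {i j : ℕ} (hi : p f i) (hij : i < j) : c f i < c f j := Nat.count_strict_mono hi hij
lemma not_p_apply (hf : StrictMono f) (k : ℕ) : ¬ p f (f k) := fun h => h k hf.le_apply rfl
lemma phi_apply_f (hf : StrictMono f) (y : ℕ → Bool) (k : ℕ) : phi f y (f k) = false := by
  simp [phi, not_p_apply f hf k]

lemma agree {j M M' : ℕ} (hM : c f j ≤ M) (hM' : c f j ≤ M')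
    (v : Fin M → Bool) (w : Fin M' → Bool)
    (hvw : ∀ t (h : t < c f j), v ⟨t, lt_of_lt_of_le h hM⟩ = w ⟨t, lt_of_lt_of_le h hM'⟩) :
    ∀ i < j, phi f (ext v) i = phi f (ext w) i := by
  intro i hij
  by_cases hp : p f i
  · have hci : c f i < c f j := c_lt_c f hp hij
    simp only [phi, if_pos hp, ext, dif_pos (lt_of_lt_of_le hci hM),
      dif_pos (lt_of_lt_of_le hci hM')]
    exact hvw _ hci
  · simp [phi, hp]

lemma c_ge (hf : StrictMono f) (n j : ℕ) (hj : j ≤ f (n+1)) : j ≤ c f j + (n+1) := by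
  classical
  have h1 : c f j + ((Finset.range j).filter (fun i => ¬ p f i)).card = j := by
    rw [c, Nat.count_eq_card_filter_range,
      Finset.card_filter_add_card_filter_not, Finset.card_range]
  have h2 : ((Finset.range j).filter (fun i => ¬ p f i)) ⊆ (Finset.range (n+1)).image f := by
    intro i hi
    simp only [Finset.mem_filter, Finset.mem_range] at hi
    obtain ⟨hij, hnp⟩ := hi
    simp only [p, not_forall] at hnp
    obtain ⟨k, hk, hfk⟩ := hnp
    have hfk' : f k = i := not_not.mp hfk
    have hkn : k < n + 1 := by
      have : f k < f (n+1) := by omega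
      exact hf.lt_iff_lt.mp this
    exact Finset.mem_image.mpr ⟨k, Finset.mem_range.mpr hkn, hfk'⟩
  have h3 : ((Finset.range j).filter (fun i => ¬ p f i)).card ≤ n + 1 :=
    le_trans (Finset.card_le_card h2) (le_trans Finset.card_image_le (by simp))
  omega

variable (H : (n : ℕ) → Finset (Fin n → Bool))

def W (j : ℕ) : Finset (Fin (c f j) → Bool) :=
  Finset.univ.filter (fun w => (fun i : Fin j => phi f (ext w) i) ∈ H j)

lemma card_W (j : ℕ) : (W f H j).card ≤ (H j).card := by
  apply Finset.card_le_card_of_injOn (fun w => (fun i : Fin j => phi f (ext w) i))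
  · intro w hw; simpa [W] using hw
  · intro w hw w' hw' hww
    funext t
    have hcard : ∀ hfin : (setOf (p f)).Finite, (t : ℕ) < hfin.toFinset.card :=
      fun hfin => t.isLt.trans_le (Nat.count_le_card hfin j)
    have hi1 : Nat.nth (p f) t < j := Nat.nth_lt_of_lt_count t.isLt
    have hi2 : p f (Nat.nth (p f) t) := Nat.nth_mem t hcard
    have hi3 : c f (Nat.nth (p f) t) = t := Nat.count_nth hcard
    have := congrFun hww ⟨Nat.nth (p f) t, hi1⟩
    simp only [phi, if_pos hi2, ext, hi3, dif_pos t.isLt] at this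
    exact this

def Bad (M j : ℕ) : Finset (Fin M → Bool) :=
  Finset.univ.filter (fun v => (fun i : Fin j => phi f (ext v) i) ∈ H j)

lemma card_Bad {j L : ℕ} (hj : j ≤ L) :
    (Bad f H (c f L) j).card ≤ (H j).card * 2 ^ (c f L - c f j) := by
  classical
  have hcj : c f j ≤ c f L := c_mono f hj
  have h1 : (Bad f H (c f L) j).card ≤
      ((W f H j) ×ˢ (Finset.univ : Finset (Fin (c f L - c f j) → Bool))).card := by
    apply Finset.card_le_card_of_injOn
      (fun v => (fun t : Fin (c f j) => v ⟨t, lt_of_lt_of_le t.isLt hcj⟩,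
                 fun t : Fin (c f L - c f j) => v ⟨c f j + t, by omega⟩))
    · intro v hv
      simp only [Finset.mem_coe, Finset.mem_product, Finset.mem_univ, and_true]
      simp only [Bad, Finset.mem_coe, Finset.mem_filter, Finset.mem_univ, true_and] at hv
      simp only [W, Finset.mem_filter, Finset.mem_univ, true_and]
      have := agree f (le_refl (c f j)) hcj
        (fun t : Fin (c f j) => v ⟨t, lt_of_lt_of_le t.isLt hcj⟩) v (fun t h => rfl)
      have heq : (fun i : Fin j => phi f (ext (fun t : Fin (c f j) =>
          v ⟨t, lt_of_lt_of_le t.isLt hcj⟩)) i) = (fun i : Fin j => phi f (ext v) i) := by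
        funext i; exact this i i.isLt
      rw [heq]; exact hv
    · intro v _ v' _ hvv
      simp only [Prod.mk.injEq] at hvv
      funext m
      by_cases hm : (m : ℕ) < c f j
      · exact congrFun hvv.1 ⟨m, hm⟩
      · have h2 := congrFun hvv.2 ⟨m - c f j, by omega⟩
        simp only at h2
        have hm' : c f j + ((m : ℕ) - c f j) = m := by omega
        simpa [hm', Fin.eta] using h2
  calc (Bad f H (c f L) j).card ≤ _ := h1
    _ = (W f H j).card * 2 ^ (c f L - c f j) := by
        rw [Finset.card_product, Finset.card_univ, Fintype.card_fun]
        simp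
    _ ≤ (H j).card * 2 ^ (c f L - c f j) := Nat.mul_le_mul_right _ (card_W f H j)

/-- the tail sum -/
noncomputable def T (m : ℕ) : ℝ≥0∞ := ∑' j : ℕ, ((H (m+j)).card : ℝ≥0∞) / 2 ^ (m+j)

lemma T_succ (m : ℕ) :
    T H m = ((H m).card : ℝ≥0∞) / 2 ^ m + T H (m+1) := by
  have h := tsum_eq_zero_add' (f := fun j => ((H (m+j)).card : ℝ≥0∞) / 2 ^ (m+j))
    ENNReal.summable
  rw [T, h, Nat.add_zero]
  congr 1
  rw [T]
  exact tsum_congr fun n => by rw [show m + (n+1) = (m+1) + n from by omega]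

lemma T_anti : Antitone (T H) := by
  apply antitone_nat_of_succ_le
  intro m
  rw [T_succ H m]
  exact self_le_add_left _ _

lemma l4inv : (1 - (1/2:ℝ≥0∞))⁻¹ = 2 := by
  rw [one_div, ENNReal.one_sub_inv_two, inv_inv]

lemma key_sum (hf : StrictMono f) (N : ℕ) (hN3 : 3 ≤ N)
    (hTf : ∀ n, N ≤ n → T H (f n) ≤ (1/4 : ℝ≥0∞) ^ n) (L : ℕ) :
    ∑ j ∈ Finset.Icc (f N) L, ((H j).card : ℝ≥0∞) / 2 ^ (c f j) ≤ 1/2 := by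
  classical
  have hsub : Finset.Icc (f N) L ⊆
      (Finset.Icc N L).biUnion (fun n => Finset.Ico (f n) (f (n+1))) := by
    intro j hj
    simp only [Finset.mem_Icc] at hj
    have hNL : N ≤ L := le_trans (le_trans hf.le_apply hj.1) hj.2
    set n := Nat.findGreatest (fun n => f n ≤ j) L with hn
    have hNn : N ≤ n := Nat.le_findGreatest hNL hj.1
    have hfn : f n ≤ j := Nat.findGreatest_spec (P := fun n => f n ≤ j) hNL hj.1
    have hnL : n ≤ L := Nat.findGreatest_le L
    have hjf : j < f (n+1) := by
      by_contra hcon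
      push_neg at hcon
      have hn1L : n + 1 ≤ L := by
        have : n + 1 ≤ f (n+1) := hf.le_apply
        omega
      exact Nat.findGreatest_is_greatest (Nat.lt_succ_self n) hn1L hcon
    simp only [Finset.mem_biUnion, Finset.mem_Icc, Finset.mem_Ico]
    exact ⟨n, ⟨hNn, hnL⟩, hfn, hjf⟩
  have hdisj : (↑(Finset.Icc N L) : Set ℕ).PairwiseDisjoint
      (fun n => Finset.Ico (f n) (f (n+1))) := by
    intro n _ m _ hnm
    rcases Nat.lt_or_ge n m with h | h
    · have hle : f (n+1) ≤ f m := hf.monotone (by omega)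
      exact Finset.disjoint_left.mpr fun j hj1 hj2 => by
        simp only [Finset.mem_Ico] at hj1 hj2; omega
    · have h' : m < n := by omega
      have hle : f (m+1) ≤ f n := hf.monotone (by omega)
      exact Finset.disjoint_left.mpr fun j hj1 hj2 => by
        simp only [Finset.mem_Ico] at hj1 hj2; omega
  calc ∑ j ∈ Finset.Icc (f N) L, ((H j).card : ℝ≥0∞) / 2 ^ (c f j)
      ≤ ∑ j ∈ (Finset.Icc N L).biUnion (fun n => Finset.Ico (f n) (f (n+1))),
          ((H j).card : ℝ≥0∞) / 2 ^ (c f j) :=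
        Finset.sum_le_sum_of_subset hsub
    _ = ∑ n ∈ Finset.Icc N L, ∑ j ∈ Finset.Ico (f n) (f (n+1)),
          ((H j).card : ℝ≥0∞) / 2 ^ (c f j) := Finset.sum_biUnion hdisj
    _ ≤ ∑ n ∈ Finset.Icc N L, 2 * (1/2 : ℝ≥0∞)^n := by
        apply Finset.sum_le_sum
        intro n hn
        simp only [Finset.mem_Icc] at hn
        have step1 : ∀ j ∈ Finset.Ico (f n) (f (n+1)),
            ((H j).card : ℝ≥0∞) / 2 ^ (c f j) ≤
            (2:ℝ≥0∞)^(n+1) * (((H j).card : ℝ≥0∞) / 2 ^ j) := by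
          intro j hj
          simp only [Finset.mem_Ico] at hj
          have hcge : j ≤ c f j + (n+1) := c_ge f hf n j (le_of_lt hj.2)
          have hle2 : (2:ℝ≥0∞) ^ j ≤ 2 ^ (c f j) * 2 ^ (n+1) := by
            rw [← pow_add]
            exact pow_le_pow_right₀ one_le_two hcge
          calc ((H j).card : ℝ≥0∞) / 2 ^ (c f j)
              = ((H j).card : ℝ≥0∞) * 2^(n+1) / (2 ^ (c f j) * 2^(n+1)) := by
                rw [ENNReal.mul_div_mul_right _ _ (by positivity)
                  (pow_ne_top ENNReal.ofNat_ne_top)]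
            _ ≤ ((H j).card : ℝ≥0∞) * 2^(n+1) / 2 ^ j :=
                ENNReal.div_le_div le_rfl hle2
            _ = (2:ℝ≥0∞)^(n+1) * (((H j).card : ℝ≥0∞) / 2 ^ j) := by
                rw [mul_comm, mul_div_assoc]
        calc ∑ j ∈ Finset.Ico (f n) (f (n+1)), ((H j).card : ℝ≥0∞) / 2 ^ (c f j)
            ≤ ∑ j ∈ Finset.Ico (f n) (f (n+1)),
                (2:ℝ≥0∞)^(n+1) * (((H j).card : ℝ≥0∞) / 2 ^ j) :=
              Finset.sum_le_sum step1
          _ = (2:ℝ≥0∞)^(n+1) * ∑ j ∈ Finset.Ico (f n) (f (n+1)),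
                (((H j).card : ℝ≥0∞) / 2 ^ j) := (Finset.mul_sum _ _ _).symm
          _ ≤ (2:ℝ≥0∞)^(n+1) * T H (f n) := by
              apply mul_le_mul_right
              rw [Finset.sum_Ico_eq_sum_range (fun j => ((H j).card : ℝ≥0∞) / 2 ^ j)
                (f n) (f (n+1))]
              exact ENNReal.sum_le_tsum _
          _ ≤ (2:ℝ≥0∞)^(n+1) * (1/4)^n := mul_le_mul_right (hTf n hn.1) _
          _ = 2 * (1/2)^n := l3 n
    _ ≤ 1/2 := by
        calc ∑ n ∈ Finset.Icc N L, 2 * (1/2 : ℝ≥0∞)^n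
            = ∑ k ∈ Finset.range (L + 1 - N), 2 * (1/2 : ℝ≥0∞)^(N + k) := by
              rw [← Finset.Ico_add_one_right_eq_Icc,
                Finset.sum_Ico_eq_sum_range (fun n => 2 * (1/2 : ℝ≥0∞)^n) N (L+1)]
          _ ≤ ∑' k : ℕ, 2 * (1/2 : ℝ≥0∞)^(N + k) := ENNReal.sum_le_tsum _
          _ = 2 * ((1/2:ℝ≥0∞)^N * ∑' k : ℕ, (1/2 : ℝ≥0∞)^k) := by
              rw [← ENNReal.tsum_mul_left, ← ENNReal.tsum_mul_left]
              exact tsum_congr fun k => by rw [pow_add]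
          _ = 2 * ((1/2:ℝ≥0∞)^N * 2) := by
              rw [ENNReal.tsum_geometric, l4inv]
          _ ≤ 2 * ((1/2:ℝ≥0∞)^3 * 2) := by
              apply mul_le_mul_right
              apply mul_le_mul_left
              exact pow_le_pow_of_le_one (by norm_num)
                (by rw [one_div]; exact ENNReal.inv_le_one.mpr one_le_two) hN3
          _ = 1/2 := l5

lemma T_one_le (hsum : ∑' n : ℕ, ((H (n+1)).card : ℝ≥0∞) / 2 ^ (n+1) ≤ 1/4) :
    T H 1 ≤ 1/4 := by
  rw [T]
  calc ∑' j : ℕ, ((H (1+j)).card : ℝ≥0∞)/2^(1+j)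
      = ∑' j : ℕ, ((H (j+1)).card : ℝ≥0∞)/2^(j+1) :=
        tsum_congr fun j => by rw [Nat.add_comm]
    _ ≤ 1/4 := hsum

lemma exists_T_lt (hsum : ∑' n : ℕ, ((H (n+1)).card : ℝ≥0∞) / 2 ^ (n+1) ≤ 1/4)
    (ε : ℝ≥0∞) (hε : 0 < ε) : ∃ m, T H m < ε := by
  set g : ℕ → ℝ≥0∞ := fun n => ((H (n+1)).card : ℝ≥0∞) / 2 ^ (n+1) with hg
  have hne : ∑' i, g i ≠ ⊤ :=
    (lt_of_le_of_lt hsum (ENNReal.div_lt_top one_ne_top (by norm_num))).ne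
  have htend := ENNReal.tendsto_sum_nat_add g hne
  obtain ⟨i, hi⟩ := (htend.eventually_lt_const hε).exists
  refine ⟨i+1, ?_⟩
  rw [T]
  calc ∑' j : ℕ, ((H ((i+1)+j)).card : ℝ≥0∞)/2^((i+1)+j)
      = ∑' k : ℕ, g (k + i) := tsum_congr fun k => by
        simp only [hg]; rw [show (i+1)+k = (k+i)+1 from by omega]
    _ < ε := hi

lemma T_fH_lt (hsum : ∑' n : ℕ, ((H (n+1)).card : ℝ≥0∞) / 2 ^ (n+1) ≤ 1/4)
    (fH : ℕ → ℕ)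
    (hfH : ∀ n, fH n =
      sInf {m : ℕ | ∑' j : ℕ, ((H (m+j)).card : ENNReal) / 2 ^ (m+j) < (1/4 : ENNReal) ^ n})
    (n : ℕ) : T H (fH n) < (1/4 : ℝ≥0∞)^n := by
  have hpos : (0:ℝ≥0∞) < (1/4)^n :=
    ENNReal.pow_pos (ENNReal.div_pos one_ne_zero (by norm_num)) n
  obtain ⟨m, hm⟩ := exists_T_lt H hsum _ hpos
  have hmem : sInf {m : ℕ | ∑' j : ℕ, ((H (m+j)).card : ENNReal) / 2 ^ (m+j)
      < (1/4 : ENNReal) ^ n} ∈ {m : ℕ | ∑' j : ℕ, ((H (m+j)).card : ENNReal) / 2 ^ (m+j)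
      < (1/4 : ENNReal) ^ n} := Nat.sInf_mem ⟨m, hm⟩
  rw [hfH n]
  exact hmem

end GfAux

open GfAux ENNReal in
theorem Gf_not_subset_H (H : (n : ℕ) → Finset (Fin n → Bool))
    (hsum : ∑' n : ℕ, ((H (n+1)).card : ENNReal) / 2 ^ (n+1) ≤ 1/4)
    (fH : ℕ → ℕ)
    (hfH : ∀ n, fH n =
      sInf {m : ℕ | ∑' j : ℕ, ((H (m+j)).card : ENNReal) / 2 ^ (m+j) < (1/4 : ENNReal) ^ n})
    (f : ℕ → ℕ) (hf : StrictMono f) (hdom : ∀ᶠ n in atTop, fH n ≤ f n) :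
    ¬ ({x : ℕ → Bool | ∀ n, x (f n) = false} ⊆
       {x : ℕ → Bool | {n : ℕ | (fun i : Fin n => x i) ∈ H n}.Infinite}) := by
  classical
  intro hsub
  obtain ⟨N₀, hN₀⟩ := Filter.eventually_atTop.mp hdom
  set N := max N₀ 3 with hN
  have hN3 : 3 ≤ N := le_max_right _ _
  have hTf : ∀ n, N ≤ n → T H (f n) ≤ (1/4:ℝ≥0∞)^n := by
    intro n hn
    have h1 : fH n ≤ f n := hN₀ n (le_trans (le_max_left _ _) hn)
    exact le_trans (T_anti H h1) (le_of_lt (T_fH_lt H hsum fH hfH n))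
  have hcount : ∀ L : ℕ, ∃ v : Fin (c f L) → Bool,
      ∀ j, f N ≤ j → j ≤ L → (fun i : Fin j => phi f (ext v) i) ∉ H j := by
    intro L
    by_contra hcon
    push_neg at hcon
    have hBuniv : (Finset.univ : Finset (Fin (c f L) → Bool)) ⊆
        (Finset.Icc (f N) L).biUnion (fun j => Bad f H (c f L) j) := by
      intro v _
      obtain ⟨j, hj1, hj2, hj3⟩ := hcon v
      exact Finset.mem_biUnion.mpr ⟨j, Finset.mem_Icc.mpr ⟨hj1, hj2⟩,
        Finset.mem_filter.mpr ⟨Finset.mem_univ _, hj3⟩⟩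
    have hcard1 : (2:ℕ) ^ (c f L) ≤
        ((Finset.Icc (f N) L).biUnion (fun j => Bad f H (c f L) j)).card := by
      calc (2:ℕ) ^ (c f L)
          = (Finset.univ : Finset (Fin (c f L) → Bool)).card := by
            rw [Finset.card_univ, Fintype.card_fun]; simp
        _ ≤ _ := Finset.card_le_card hBuniv
    have hcard2 : ((Finset.Icc (f N) L).biUnion (fun j => Bad f H (c f L) j)).card
        ≤ ∑ j ∈ Finset.Icc (f N) L, (Bad f H (c f L) j).card :=
      Finset.card_biUnion_le
    have hcard3 : ∑ j ∈ Finset.Icc (f N) L, (Bad f H (c f L) j).card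
        ≤ ∑ j ∈ Finset.Icc (f N) L, (H j).card * 2 ^ (c f L - c f j) :=
      Finset.sum_le_sum fun j hj => card_Bad f H (Finset.mem_Icc.mp hj).2
    have hENN : ((∑ j ∈ Finset.Icc (f N) L,
        (H j).card * 2 ^ (c f L - c f j) : ℕ) : ℝ≥0∞) < 2 ^ (c f L) := by
      push_cast
      have heq : ∀ j ∈ Finset.Icc (f N) L,
          ((H j).card : ℝ≥0∞) * 2 ^ (c f L - c f j)
          = 2 ^ (c f L) * (((H j).card : ℝ≥0∞) / 2 ^ (c f j)) := by
        intro j hj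
        have hcj : c f j ≤ c f L := c_mono f (Finset.mem_Icc.mp hj).2
        have h2 : (2:ℝ≥0∞) ^ (c f L - c f j) = 2 ^ (c f L) / 2 ^ (c f j) := by
          rw [ENNReal.eq_div_iff (pow_ne_zero _ two_ne_zero)
            (pow_ne_top ENNReal.ofNat_ne_top), ← pow_add]
          congr 1
          omega
        rw [h2, div_eq_mul_inv, div_eq_mul_inv]
        ring
      rw [Finset.sum_congr rfl heq, ← Finset.mul_sum]
      calc (2:ℝ≥0∞) ^ (c f L) * ∑ j ∈ Finset.Icc (f N) L,
              (((H j).card : ℝ≥0∞) / 2 ^ (c f j))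
          ≤ (2:ℝ≥0∞) ^ (c f L) * (1/2) :=
            mul_le_mul_right (key_sum f H hf N hN3 hTf L) _
        _ < (2:ℝ≥0∞) ^ (c f L) * 1 := by
            rw [ENNReal.mul_lt_mul_iff_right (pow_ne_zero _ two_ne_zero)
              (pow_ne_top ENNReal.ofNat_ne_top)]
            rw [one_div]
            exact ENNReal.inv_lt_one.mpr one_lt_two
        _ = (2:ℝ≥0∞) ^ (c f L) := mul_one _
    have hnat : (∑ j ∈ Finset.Icc (f N) L,
        (H j).card * 2 ^ (c f L - c f j) : ℕ) < 2 ^ (c f L) := by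
      exact_mod_cast hENN
    omega
  set C : ℕ → Set (ℕ → Bool) := fun L =>
    {y | ∀ j, f N ≤ j → j ≤ L → (fun i : Fin j => phi f y i) ∉ H j} with hC
  have hmono : ∀ L, C (L+1) ⊆ C L := fun L y hy j h1 h2 => hy j h1 (by omega)
  have hclosed : ∀ L, IsClosed (C L) := by
    intro L
    have hrep : C L = ⋂ (j : ℕ),
        {y : ℕ → Bool | f N ≤ j → j ≤ L → (fun i : Fin j => phi f y i) ∉ H j} := by
      ext y
      simp only [hC, Set.mem_iInter, Set.mem_setOf_eq]
    rw [hrep]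
    apply isClosed_iInter
    intro j
    by_cases h1 : f N ≤ j ∧ j ≤ L
    · have hcont : Continuous (fun y : ℕ → Bool => (fun i : Fin j => phi f y i)) := by
        apply continuous_pi
        intro i
        by_cases hp : p f i
        · simpa [phi, hp] using continuous_apply (c f i)
        · simpa [phi, hp] using continuous_const
      have heq2 : {y : ℕ → Bool | f N ≤ j → j ≤ L → (fun i : Fin j => phi f y i) ∉ H j}
          = (fun y : ℕ → Bool => (fun i : Fin j => phi f y i)) ⁻¹'
            ((↑(H j) : Set (Fin j → Bool))ᶜ) := by
        ext y
        simp [h1.1, h1.2]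
      rw [heq2]
      exact (isClosed_discrete _).preimage hcont
    · have heq2 : {y : ℕ → Bool | f N ≤ j → j ≤ L →
          (fun i : Fin j => phi f y i) ∉ H j} = Set.univ := by
        ext y
        simp only [Set.mem_setOf_eq, Set.mem_univ, iff_true]
        intro hj1 hj2
        exact absurd ⟨hj1, hj2⟩ h1
      rw [heq2]
      exact isClosed_univ
  have hne : ∀ L, (C L).Nonempty := by
    intro L
    obtain ⟨v, hv⟩ := hcount L
    exact ⟨ext v, fun j h1 h2 => hv j h1 h2⟩
  obtain ⟨y, hy⟩ := IsCompact.nonempty_iInter_of_sequence_nonempty_isCompact_isClosed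
    C hmono hne ((hclosed 0).isCompact) hclosed
  have hyC : ∀ L, y ∈ C L := fun L => Set.mem_iInter.mp hy L
  have hxG : (phi f y) ∈ {x : ℕ → Bool | ∀ n, x (f n) = false} :=
    fun n => phi_apply_f f hf y n
  have hxH := hsub hxG
  have hfin : {n : ℕ | (fun i : Fin n => phi f y i) ∈ H n} ⊆ Set.Iio (f N) := by
    intro n hn
    simp only [Set.mem_setOf_eq] at hn
    by_contra hcon
    have hcon' : f N ≤ n := by simpa using hcon
    exact (hyC n) n hcon' le_rfl hn
  exact (Set.Finite.subset (Set.finite_Iio (f N)) hfin).not_infinite hxH
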